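/- Let d ≥ 1 be an integer and S ⊆ ℤ. The following statements are equivalent: (1) S is topologically d-intersective, i.e. for every syndetic set A ⊆ ℤ there exists n ∈ S such that A ∩ (A−n) ∩ (A−2n) ∩ ⋯ ∩ (A−dn) ≠ ∅; (2) S is a set of d-topological recurrence; (3) for every t.d.s. (X,T) there exist x ∈ X and a sequence (n_i) of elements of S such that for each 1 ≤ j ≤ d, T^{j n_i} x → x as i → ∞. -/

import Mathlib

open scoped Classical
open MeasureTheory Filter Topology

noncomputable section

/-- Integer iterate of a bijection `T` of a set: `zIter T n = T^n`. -/
def zIter {X : Type*} (T : Equiv.Perm X) (n : ℤ) : X → X := ⇑(T ^ n)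

/-- Integer iterate of a homeomorphism. -/
def hIter {X : Type*} [TopologicalSpace X] (T : X ≃ₜ X) (n : ℤ) : X → X :=
  zIter T.toEquiv n

/-- The integer nearest to `a`, with ties broken towards the smaller integer.
This is the `⌈·⌉` of the paper. -/
def nearInt (a : ℝ) : ℤ := if a - (⌊a⌋ : ℝ) ≤ 1/2 then ⌊a⌋ else ⌈a⌉

/-- The distance from `a` to the nearest integer, i.e. `‖a‖` in the paper. -/
def distInt (a : ℝ) : ℝ := |a - (nearInt a : ℝ)|

/-- Generalized polynomials of degree at most `d` (for `d ≥ 1`):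
`GP 1` is the smallest collection of functions `ℤ → ℝ` containing `n ↦ a n`
and closed under taking the nearest integer, scalar multiplication and finite sums;
`GP d` moreover contains every `GP e` for `e < d` and all functions
`n ↦ a₀ n^{p₀} ⌈f₁(n)⌉ ⋯ ⌈f k (n)⌉` with `f l ∈ GP (p l)` and `p₀ + ∑ p l = d`. -/
inductive GP : ℕ → (ℤ → ℝ) → Prop
  | lin (a : ℝ) : GP 1 (fun n => a * n)
  | mono {d : ℕ} (hd : 1 ≤ d) (a₀ : ℝ) (p₀ : ℕ) {k : ℕ} (p : Fin k → ℕ)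
      (f : Fin k → ℤ → ℝ) (hf : ∀ l, GP (p l) (f l)) (hsum : p₀ + ∑ l, p l = d) :
      GP d (fun n => a₀ * (n : ℝ) ^ p₀ * ∏ l, (nearInt (f l n) : ℝ))
  | incl {d e : ℕ} (hed : e < d) {f : ℤ → ℝ} (hf : GP e f) : GP d f
  | ceil {d : ℕ} {f : ℤ → ℝ} (hf : GP d f) : GP d (fun n => (nearInt (f n) : ℝ))
  | smul {d : ℕ} (c : ℝ) {f : ℤ → ℝ} (hf : GP d f) : GP d (fun n => c * f n)
  | add {d : ℕ} {f g : ℤ → ℝ} (hf : GP d f) (hg : GP d g) : GP d (fun n => f n + g n)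

/-- The bracket expression `L(a₁, …, a_ℓ) = a₁⌈L(a₂, …, a_ℓ)⌉`, `L(a) = a`. -/
def Lfun : List ℝ → ℝ
  | [] => 0
  | [a] => a
  | a :: b :: rest => a * (nearInt (Lfun (b :: rest)) : ℝ)

/-- Special generalized polynomials of degree at most `d`:
the functions `n ↦ L(n^{j₁} a₁, …, n^{j_ℓ} a_ℓ)` with `1 ≤ ℓ`, `j t ≥ 1`, `∑ j t ≤ d`. -/
def SGP (d : ℕ) (g : ℤ → ℝ) : Prop :=
  ∃ ℓ : ℕ, 1 ≤ ℓ ∧ ∃ (a : Fin ℓ → ℝ) (j : Fin ℓ → ℕ),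
    (∀ t, 1 ≤ j t) ∧ (∑ t, j t) ≤ d ∧
    g = fun n : ℤ => Lfun (List.ofFn fun t => (n : ℝ) ^ (j t) * a t)

/-- `FS({n i}) = {n_{i₁} + ⋯ + n_{i_k} : i₁ < ⋯ < i_k}`, the set of finite sums. -/
def FS {d : ℕ} (n : Fin d → ℤ) : Set ℤ :=
  { m | ∃ I : Finset (Fin d), I.Nonempty ∧ m = ∑ i ∈ I, n i }

/-- `SG d P`: sums `p_{i₁} + ⋯ + p_{i_k}` over strictly increasing finite index
sequences whose consecutive gaps are at most `d` (infinite sequence `P`). -/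
def SG (d : ℕ) (P : ℕ → ℤ) : Set ℤ :=
  { n | ∃ k : ℕ, ∃ i : Fin (k + 1) → ℕ, StrictMono i ∧
      (∀ t : Fin k, i t.succ - i t.castSucc ≤ d) ∧ n = ∑ t, P (i t) }

/-- `SGfin d P` : the same for a finite sequence `P` of length `m`. -/
def SGfin (d : ℕ) {m : ℕ} (P : Fin m → ℤ) : Set ℤ :=
  { n | ∃ k : ℕ, ∃ i : Fin (k + 1) → Fin m, StrictMono i ∧
      (∀ t : Fin k, (i t.succ : ℕ) - (i t.castSucc : ℕ) ≤ d) ∧ n = ∑ t, P (i t) }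

/-- A set of integers is syndetic if it has bounded gaps. -/
def Syndetic (A : Set ℤ) : Prop :=
  ∃ N : ℕ, ∀ i : ℤ, ∃ j, i ≤ j ∧ j ≤ i + N ∧ j ∈ A

/-- `F` has positive upper Banach density. -/
def PosUpperBanachDensity (F : Set ℤ) : Prop :=
  ∃ δ : ℝ, 0 < δ ∧ ∀ N : ℕ, ∃ (a : ℤ) (L : ℕ), N ≤ L ∧ 1 ≤ L ∧
    δ * L ≤ ((Finset.Icc a (a + L - 1)).filter (fun x => x ∈ F)).card

/-- A set `A ⊆ ℤ` contains finite IP-sets of arbitrarily long lengths. -/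
def ContainsArbLongFIP (A : Set ℤ) : Prop :=
  ∀ k : ℕ, 1 ≤ k → ∃ p : Fin k → ℤ, FS p ⊆ A

/-- A topological dynamical system `(X, T)` is minimal: every orbit is dense. -/
def MinimalTDS {X : Type*} [TopologicalSpace X] (T : X ≃ₜ X) : Prop :=
  ∀ x : X, Dense (Set.range fun n : ℤ => hIter T n x)

/-- `Nset T x U = N(x, U) = {n ∈ ℤ : Tⁿ x ∈ U}`. -/
def Nset {X : Type*} [TopologicalSpace X] (T : X ≃ₜ X) (x : X) (U : Set X) : Set ℤ :=
  { n : ℤ | hIter T n x ∈ U }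

/-- The regionally proximal relation of order `d`. -/
def RPd {X : Type*} [MetricSpace X] (T : X ≃ₜ X) (d : ℕ) (x y : X) : Prop :=
  ∀ δ : ℝ, 0 < δ → ∃ (x' y' : X) (n : Fin d → ℤ),
    dist x x' < δ ∧ dist y y' < δ ∧
    ∀ ε : Finset (Fin d), ε.Nonempty →
      dist (hIter T (∑ i ∈ ε, n i) x') (hIter T (∑ i ∈ ε, n i) y') < δ

/-- `S` is a set of `d`-topological recurrence. -/
def TopRecSet (d : ℕ) (S : Set ℤ) : Prop :=
  ∀ (X : Type) [MetricSpace X] [CompactSpace X] (T : X ≃ₜ X), MinimalTDS T →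
    ∀ U : Set X, IsOpen U → U.Nonempty →
      ∃ n ∈ S, (⋂ j ∈ Finset.range (d + 1), hIter T ((j : ℤ) * n) ⁻¹' U).Nonempty

/-- `S` is a set of `d`-recurrence (measurable recurrence). -/
def MeasRecSet (d : ℕ) (S : Set ℤ) : Prop :=
  ∀ (Y : Type) [MeasurableSpace Y] [StandardBorelSpace Y]
    (μ : Measure Y) [IsProbabilityMeasure μ] (T : Y ≃ᵐ Y),
    MeasurePreserving (⇑T) μ μ →
    ∀ A : Set Y, MeasurableSet A → 0 < μ A →
      ∃ n ∈ S, 0 < μ (⋂ j ∈ Finset.range (d + 1), zIter T.toEquiv ((j : ℤ) * n) ⁻¹' A)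

/-- `P` is a Birkhoff recurrence set of order `d`. -/
def BirkhoffRecSet (d : ℕ) (P : Set ℤ) : Prop :=
  ∀ (X : Type) [MetricSpace X] [CompactSpace X] (T : X ≃ₜ X), MinimalTDS T →
    ∀ U : Set X, IsOpen U → U.Nonempty →
      ∃ n : Fin d → ℤ, FS n ⊆ P ∧ (U ∩ ⋂ m ∈ FS n, hIter T m ⁻¹' U).Nonempty

/-- `F` is a Poincaré recurrence set of order `d`. -/
def PoincareRecSet (d : ℕ) (F : Set ℤ) : Prop :=
  ∀ (Y : Type) [MeasurableSpace Y] [StandardBorelSpace Y]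
    (μ : Measure Y) [IsProbabilityMeasure μ] (T : Y ≃ᵐ Y),
    MeasurePreserving (⇑T) μ μ →
    ∀ A : Set Y, MeasurableSet A → 0 < μ A →
      ∃ n : Fin d → ℤ, FS n ⊆ F ∧ 0 < μ (A ∩ ⋂ m ∈ FS n, zIter T.toEquiv m ⁻¹' A)

/-- The upper unitriangular matrix `M(a)` with entries `(M(a))_{i, i+k} = a i k`
(1-based indexing). -/
def Mmat (d : ℕ) (a : ℕ → ℕ → ℝ) : Matrix (Fin (d + 1)) (Fin (d + 1)) ℝ :=
  fun r c =>
    if (r : ℕ) = (c : ℕ) then 1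
    else if (r : ℕ) < (c : ℕ) then a ((r : ℕ) + 1) ((c : ℕ) - (r : ℕ)) else 0

/-- `P_ℓ(a; i, k) = ∑ a_i^{s₁} a_{i+s₁}^{s₂} ⋯`, sum over `(s₁,…,s_ℓ) ∈ {1,…,k}^ℓ`
with `s₁ + ⋯ + s_ℓ = k`. -/
def Ppoly (a : ℕ → ℕ → ℝ) (i k ℓ : ℕ) : ℝ :=
  ∑ s ∈ Finset.univ.filter (fun s : Fin ℓ → Fin k => (∑ t, ((s t : ℕ) + 1)) = k),
    ∏ t : Fin ℓ,
      a (i + ∑ u ∈ Finset.univ.filter (fun u : Fin ℓ => u < t), ((s u : ℕ) + 1))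
        ((s t : ℕ) + 1)

/-- The upper unitriangular matrix with superdiagonal `α₁, …, α_d` (1-based). -/
def Amat (d : ℕ) (α : ℕ → ℝ) : Matrix (Fin (d + 1)) (Fin (d + 1)) ℝ :=
  fun r c =>
    if (r : ℕ) = (c : ℕ) then 1
    else if (c : ℕ) = (r : ℕ) + 1 then α ((r : ℕ) + 1) else 0

end

noncomputable section AuxRecurrence

section IterAux
variable {X : Type*} [TopologicalSpace X] (T : X ≃ₜ X)

lemma hIter_zero : hIter T 0 = id := by
  ext x; simp [hIter, zIter]

lemma hIter_add (m n : ℤ) (x : X) : hIter T (m + n) x = hIter T m (hIter T n x) := by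
  simp only [hIter, zIter, zpow_add]; rfl

lemma hIter_one (x : X) : hIter T 1 x = T x := by simp [hIter, zIter]

lemma hIter_neg_one (x : X) : hIter T (-1) x = T.symm x := by
  simp [hIter, zIter]

lemma hIter_succ (n : ℤ) (x : X) : hIter T (n + 1) x = T (hIter T n x) := by
  rw [add_comm, hIter_add, hIter_one]

lemma hIter_pred (n : ℤ) (x : X) : hIter T (n - 1) x = T.symm (hIter T n x) := by
  rw [sub_eq_add_neg, add_comm, hIter_add, hIter_neg_one]

lemma hIter_continuous (n : ℤ) : Continuous (hIter T n) := by
  induction n using Int.induction_on with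
  | zero => rw [hIter_zero]; exact continuous_id
  | succ k ih =>
      have h : hIter T (k + 1) = fun x => T (hIter T k x) := by
        ext x; rw [hIter_succ]
      rw [h]; exact T.continuous.comp ih
  | pred k ih =>
      have h : hIter T (-k - 1) = fun x => T.symm (hIter T (-k) x) := by
        ext x; rw [hIter_pred]
      rw [h]; exact T.symm.continuous.comp ih

lemma hIter_conj {Y : Type*} [TopologicalSpace Y] (S : Y ≃ₜ Y) (φ : Y → X)
    (h : ∀ y, φ (S y) = T (φ y)) (n : ℤ) (y : Y) :
    φ (hIter S n y) = hIter T n (φ y) := by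
  have hinv : ∀ y, φ (S.symm y) = T.symm (φ y) := by
    intro y
    have h2 := h (S.symm y)
    simp only [Homeomorph.apply_symm_apply] at h2
    rw [h2, Homeomorph.symm_apply_apply]
  induction n using Int.induction_on with
  | zero => simp [hIter_zero]
  | succ k ih => rw [hIter_succ, hIter_succ, h, ih]
  | pred k ih =>
      have e1 : (-(k : ℤ) - 1) = (-(k:ℤ)) - 1 := by ring
      rw [e1, hIter_pred, hIter_pred, hinv, ih]

end IterAux

/-- Restriction of a homeomorphism to an invariant set. -/
def restrictHomeo {X : Type*} [TopologicalSpace X] (T : X ≃ₜ X) {M : Set X}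
    (hM : T '' M = M) : M ≃ₜ M where
  toFun y := ⟨T y, by
    have h2 : T (y : X) ∈ T '' M := Set.mem_image_of_mem T y.2
    rwa [hM] at h2⟩
  invFun y := ⟨T.symm y, by
    have h2 : (y : X) ∈ T '' M := by rw [hM]; exact y.2
    rcases h2 with ⟨z, hz, hzy⟩
    simpa [← hzy] using hz⟩
  left_inv y := by ext; simp
  right_inv y := by ext; simp
  continuous_toFun := by
    apply Continuous.subtype_mk (T.continuous.comp continuous_subtype_val)
  continuous_invFun := by
    apply Continuous.subtype_mk (T.symm.continuous.comp continuous_subtype_val)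

lemma restrictHomeo_val {X : Type*} [TopologicalSpace X] (T : X ≃ₜ X) {M : Set X}
    (hM : T '' M = M) (n : ℤ) (y : M) :
    ((hIter (restrictHomeo T hM) n y : M) : X) = hIter T n (y : X) :=
  hIter_conj T (restrictHomeo T hM) Subtype.val (fun _ => rfl) n y

/-- Every nonempty compact invariant closed set contains a minimal closed invariant subset. -/
lemma exists_minimal_subsystem {X : Type*} [TopologicalSpace X] [CompactSpace X]
    (T : X ≃ₜ X) (K : Set X) (hKne : K.Nonempty) (hKcl : IsClosed K) (hKinv : T '' K = K) :
    ∃ M : Set X, M ⊆ K ∧ M.Nonempty ∧ IsClosed M ∧ T '' M = M ∧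
      ∀ M' : Set X, M' ⊆ M → M'.Nonempty → IsClosed M' → T '' M' = M' → M' = M := by
  classical
  set S : Set (Set X) := {M | M.Nonempty ∧ IsClosed M ∧ T '' M = M} with hS
  have hzorn := zorn_superset_nonempty S ?_ K ⟨hKne, hKcl, hKinv⟩
  · rcases hzorn with ⟨M, hMK, hMmin⟩
    obtain ⟨hMne, hMcl, hMinv⟩ := hMmin.prop
    refine ⟨M, hMK, hMne, hMcl, hMinv, ?_⟩
    intro M' hsub hne hcl hinv
    exact (hMmin.eq_of_superset ⟨hne, hcl, hinv⟩ hsub).symm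
  · intro c hcS hchain hcne
    have hne : ∀ s ∈ c, s.Nonempty := fun s hs => (hcS hs).1
    have hcl : ∀ s ∈ c, IsClosed s := fun s hs => (hcS hs).2.1
    have hinv : ∀ s ∈ c, T '' s = s := fun s hs => (hcS hs).2.2
    haveI : Nonempty c := hcne.to_subtype
    have hdir : Directed (· ⊇ ·) (fun s : c => (s : Set X)) := by
      intro s t
      rcases hchain.total s.2 t.2 with h | h
      · exact ⟨s, le_refl _, h⟩
      · exact ⟨t, h, le_refl _⟩
    have hint : (⋂ s : c, (s : Set X)).Nonempty :=
      IsCompact.nonempty_iInter_of_directed_nonempty_isCompact_isClosed _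
        hdir (fun s => hne s s.2) (fun s => (hcl s s.2).isCompact) (fun s => hcl s s.2)
    refine ⟨⋂ s : c, (s : Set X), ⟨hint, ?_, ?_⟩, ?_⟩
    · exact isClosed_iInter fun s => hcl s s.2
    · have h2 : T '' (⋂ s : c, (s : Set X)) = ⋂ s : c, T '' (s : Set X) :=
        Set.InjOn.image_iInter_eq (T.injective.injOn)
      rw [h2]
      exact Set.iInter_congr fun s => hinv s s.2
    · intro s hs
      exact Set.iInter_subset (fun t : c => (t : Set X)) ⟨s, hs⟩

/-- The restriction of a system to a minimal closed invariant set is a minimal t.d.s. -/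
lemma minimalTDS_restrict {X : Type*} [TopologicalSpace X] (T : X ≃ₜ X) {M : Set X}
    (hMcl : IsClosed M) (hMinv : T '' M = M)
    (hmin : ∀ M' : Set X, M' ⊆ M → M'.Nonempty → IsClosed M' → T '' M' = M' → M' = M) :
    MinimalTDS (restrictHomeo T hMinv) := by
  intro x
  set TM := restrictHomeo T hMinv with hTM
  set R := Set.range fun n : ℤ => hIter TM n x with hR
  have hval : Subtype.val '' R = Set.range fun n : ℤ => hIter T n (x : X) := by
    ext z
    constructor
    · rintro ⟨w, ⟨n, rfl⟩, rfl⟩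
      exact ⟨n, (restrictHomeo_val T hMinv n x).symm⟩
    · rintro ⟨n, rfl⟩
      exact ⟨hIter TM n x, ⟨n, rfl⟩, restrictHomeo_val T hMinv n x⟩
  set C := closure (Subtype.val '' R) with hC
  have hCsub : C ⊆ M := by
    rw [hC]
    apply hMcl.closure_subset_iff.mpr
    rintro z ⟨w, _, rfl⟩
    exact w.2
  have hCne : C.Nonempty := by
    refine ⟨(x : X), subset_closure ⟨x, ⟨0, ?_⟩, rfl⟩⟩
    show hIter TM 0 x = x
    rw [hIter_zero]; rfl
  have hCinv : T '' C = C := by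
    have himg : T '' (Subtype.val '' R) = Subtype.val '' R := by
      rw [hval]
      ext z
      constructor
      · rintro ⟨-, ⟨n, rfl⟩, rfl⟩
        exact ⟨n + 1, by simp only []; rw [hIter_succ]⟩
      · rintro ⟨n, rfl⟩
        exact ⟨hIter T (n - 1) (x : X), ⟨n - 1, rfl⟩, by simp only []; rw [← hIter_succ, sub_add_cancel]⟩
    rw [hC, Homeomorph.image_closure, himg]
  have hCM : C = M := hmin C hCsub hCne isClosed_closure hCinv
  intro p
  rw [closure_subtype]
  show (p : X) ∈ C
  rw [hCM]
  exact p.2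

/-- In a minimal system, the visit times of any point to a nonempty open set are syndetic. -/
lemma syndetic_Nset {X : Type*} [MetricSpace X] [CompactSpace X] (T : X ≃ₜ X)
    (hmin : MinimalTDS T) (x : X) (U : Set X) (hU : IsOpen U) (hUne : U.Nonempty) :
    Syndetic {k : ℤ | hIter T k x ∈ U} := by
  have hcover : ∀ y : X, ∃ n : ℤ, hIter T n y ∈ U := by
    intro y
    obtain ⟨z, ⟨n, rfl⟩, hz⟩ := (hmin y).exists_mem_open hU hUne
    exact ⟨n, hz⟩
  have hXcover : (Set.univ : Set X) ⊆ ⋃ n : ℤ, hIter T n ⁻¹' U := by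
    intro y _
    obtain ⟨n, hn⟩ := hcover y
    exact Set.mem_iUnion.mpr ⟨n, hn⟩
  obtain ⟨t, ht⟩ := isCompact_univ.elim_finite_subcover (fun n : ℤ => hIter T n ⁻¹' U)
    (fun n => (hIter_continuous T n).isOpen_preimage U hU) hXcover
  have htne : t.Nonempty := by
    by_contra h
    rw [Finset.not_nonempty_iff_eq_empty] at h
    obtain ⟨y, _⟩ := hcover x
    have := ht (Set.mem_univ x)
    simp [h] at this
  set a := t.min' htne
  set b := t.max' htne
  refine ⟨(b - a).toNat, ?_⟩
  intro i
  have hmem := ht (Set.mem_univ (hIter T (i - a) x))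
  simp only [Set.mem_iUnion, Set.mem_preimage, exists_prop] at hmem
  obtain ⟨m, hmt, hmU⟩ := hmem
  refine ⟨i + (m - a), by linarith [t.min'_le m hmt], ?_, ?_⟩
  · have h1 : m ≤ b := t.le_max' m hmt
    have h2 : a ≤ b := t.min'_le b (t.max'_mem htne)
    have h3 : ((b - a).toNat : ℤ) = b - a := Int.toNat_of_nonneg (by linarith)
    rw [h3]
    linarith
  · show hIter T (i + (m - a)) x ∈ U
    have h4 : i + (m - a) = m + (i - a) := by ring
    rw [h4, hIter_add]
    exact hmU

/-- Main construction: in a minimal system, a `d`-topological recurrence set gives a point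
to which all the iterates along some sequence from `S` return simultaneously. -/
lemma key_construction (d : ℕ) (S : Set ℤ) (htr : TopRecSet d S)
    (X : Type) [MetricSpace X] [CompactSpace X] [Nonempty X] (T : X ≃ₜ X)
    (hmin : MinimalTDS T) :
    ∃ (x : X) (ns : ℕ → ℤ), (∀ i, ns i ∈ S) ∧
      ∀ j : ℕ, j ≤ d →
        Filter.Tendsto (fun i => hIter T ((j : ℤ) * ns i) x) Filter.atTop (nhds x) := by
  classical
  have key : ∀ (i : ℕ) (V : {V : Set X // IsOpen V ∧ V.Nonempty}),
      ∃ p : ℤ × X × ℝ, p.1 ∈ S ∧ 0 < p.2.2 ∧ p.2.2 ≤ (1/2 : ℝ) ^ i ∧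
        ∀ j ∈ Finset.range (d + 1),
          Metric.closedBall p.2.1 p.2.2 ⊆ hIter T ((j : ℤ) * p.1) ⁻¹' V.1 := by
    intro i V
    obtain ⟨n, hnS, y, hy⟩ := htr X T hmin V.1 V.2.1 V.2.2
    set W : Set X := ⋂ j ∈ Finset.range (d + 1), hIter T ((j : ℤ) * n) ⁻¹' V.1 with hW
    have hWopen : IsOpen W := isOpen_biInter_finset fun j _ =>
      (hIter_continuous T ((j : ℤ) * n)).isOpen_preimage V.1 V.2.1
    obtain ⟨r, hr, hball⟩ := Metric.isOpen_iff.mp hWopen y hy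
    refine ⟨⟨n, y, min (r / 2) ((1/2 : ℝ) ^ i)⟩, hnS, ?_, min_le_right _ _, ?_⟩
    · exact lt_min (by linarith) (by positivity)
    · intro j hj
      have h1 : Metric.closedBall y (min (r / 2) ((1/2 : ℝ) ^ i)) ⊆ Metric.ball y r :=
        Metric.closedBall_subset_ball (lt_of_le_of_lt (min_le_left _ _) (by linarith))
      intro z hz
      exact Set.mem_iInter₂.mp (hball (h1 hz)) j hj
  choose F hF1 hF2 hF3 hF4 using key
  let step : ∀ _ : ℕ, {V : Set X // IsOpen V ∧ V.Nonempty} → {V : Set X // IsOpen V ∧ V.Nonempty} :=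
    fun i V => ⟨Metric.ball (F i V).2.1 (F i V).2.2,
      Metric.isOpen_ball, ⟨(F i V).2.1, Metric.mem_ball_self (hF2 i V)⟩⟩
  let st : ℕ → {V : Set X // IsOpen V ∧ V.Nonempty} :=
    fun i => Nat.rec ⟨Set.univ, isOpen_univ, Set.univ_nonempty⟩ step i
  have hst_succ : ∀ i, st (i + 1) = step i (st i) := fun i => rfl
  set N : ℕ → ℤ := fun i => (F i (st i)).1 with hN
  set Y : ℕ → X := fun i => (F i (st i)).2.1 with hY
  set R : ℕ → ℝ := fun i => (F i (st i)).2.2 with hR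
  set B : ℕ → Set X := fun i => Metric.closedBall (Y i) (R i) with hB
  have hRpos : ∀ i, 0 < R i := fun i => hF2 i (st i)
  have hRle : ∀ i, R i ≤ (1/2 : ℝ) ^ i := fun i => hF3 i (st i)
  have hBsub : ∀ i, ∀ j ∈ Finset.range (d + 1), B i ⊆ hIter T ((j : ℤ) * N i) ⁻¹' (st i).1 :=
    fun i => hF4 i (st i)
  have hBst : ∀ i, B i ⊆ (st i).1 := by
    intro i
    have h0 := hBsub i 0 (Finset.mem_range.mpr (Nat.succ_pos d))
    intro z hz
    have := h0 hz
    simpa [hIter_zero] using this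
  have hstB : ∀ i, (st (i + 1)).1 ⊆ B i := by
    intro i
    rw [hst_succ]
    exact Metric.ball_subset_closedBall
  have hBanti : ∀ i, B (i + 1) ⊆ B i := fun i => (hBst (i + 1)).trans (hstB i)
  have hBne : ∀ i, (B i).Nonempty := fun i => ⟨Y i, Metric.mem_closedBall_self (hRpos i).le⟩
  have hBcl : ∀ i, IsClosed (B i) := fun i => Metric.isClosed_closedBall
  have hint : (⋂ i, B i).Nonempty :=
    IsCompact.nonempty_iInter_of_sequence_nonempty_isCompact_isClosed B hBanti hBne
      (hBcl 0).isCompact hBcl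
  obtain ⟨x, hx⟩ := hint
  have hxB : ∀ i, x ∈ B i := Set.mem_iInter.mp hx
  refine ⟨x, N, fun i => hF1 i (st i), ?_⟩
  intro j hj
  rw [Metric.tendsto_atTop]
  intro ε hε
  obtain ⟨K, hK⟩ := exists_pow_lt_of_lt_one (show (0:ℝ) < ε/4 by linarith) (by norm_num : (1/2 : ℝ) < 1)
  refine ⟨K + 1, ?_⟩
  intro i hi
  obtain ⟨k, rfl⟩ : ∃ k, i = k + 1 :=
    ⟨i - 1, (Nat.succ_pred_eq_of_pos (lt_of_lt_of_le (Nat.succ_pos K) hi)).symm⟩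
  have hkK : K ≤ k := Nat.lt_succ_iff.mp (Nat.lt_of_lt_of_le (Nat.lt_succ_self K) hi)
  -- both x and its iterate lie in st (k+1) = ball (Y k) (R k)
  have hxst : x ∈ Metric.ball (Y k) (R k) := by
    have := hBst (k + 1) (hxB (k + 1))
    rwa [hst_succ] at this
  have hximg : hIter T ((j : ℤ) * N (k + 1)) x ∈ Metric.ball (Y k) (R k) := by
    have hmemr : j ∈ Finset.range (d + 1) := Finset.mem_range.mpr (Nat.lt_succ_of_le hj)
    have h2 := hBsub (k + 1) j hmemr (hxB (k + 1))
    have h3 : hIter T ((j : ℤ) * N (k + 1)) x ∈ (st (k + 1)).1 := h2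
    rwa [hst_succ] at h3
  have hdist : dist (hIter T ((j : ℤ) * N (k + 1)) x) x < 2 * R k := by
    calc dist (hIter T ((j : ℤ) * N (k + 1)) x) x
        ≤ dist (hIter T ((j : ℤ) * N (k + 1)) x) (Y k) + dist (Y k) x := dist_triangle _ _ _
      _ < R k + R k := by
          have h1 := Metric.mem_ball.mp hximg
          have h2 := Metric.mem_ball.mp hxst
          rw [dist_comm (Y k) x]
          linarith
      _ = 2 * R k := by ring
  have hcmp : (1/2 : ℝ) ^ k ≤ (1/2 : ℝ) ^ K :=
    pow_le_pow_of_le_one (by norm_num) (by norm_num) hkK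
  have := hRle k
  calc dist (hIter T ((j : ℤ) * N (k + 1)) x) x < 2 * R k := hdist
    _ ≤ 2 * (1/2 : ℝ) ^ K := by nlinarith
    _ < ε := by nlinarith

/-- The discrete metric on `Bool`, inducing the standard (discrete) topology. -/
def boolMS : MetricSpace Bool := by
  have hinj : Function.Injective (fun b : Bool => if b then (1:ℝ) else 0) := by
    intro a b h; cases a <;> cases b <;> simp_all
  refine (MetricSpace.induced (fun b => if b then (1:ℝ) else 0) hinj inferInstance).replaceTopology ?_
  letI m := MetricSpace.induced (fun b : Bool => if b then (1:ℝ) else 0) hinj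
    (inferInstance : MetricSpace ℝ)
  refine (eq_bot_of_singletons_open ?_).symm.trans rfl
  intro b
  rw [Metric.isOpen_iff]
  intro c hc
  refine ⟨1/2, by norm_num, ?_⟩
  intro e he
  simp only [Metric.mem_ball] at he
  have hde : dist e c = dist (if e then (1:ℝ) else 0) (if c then (1:ℝ) else 0) := rfl
  rw [hde, Real.dist_eq] at he
  simp only [Set.mem_singleton_iff] at hc ⊢
  subst hc
  cases e <;> cases c <;> simp_all <;> norm_num at he

/-- The shift on `ℤ → Bool`. -/
def shiftHomeo : (ℤ → Bool) ≃ₜ (ℤ → Bool) where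
  toFun z := fun k => z (k + 1)
  invFun z := fun k => z (k - 1)
  left_inv z := by ext k; simp
  right_inv z := by ext k; simp
  continuous_toFun := continuous_pi fun k => continuous_apply (k + 1)
  continuous_invFun := continuous_pi fun k => continuous_apply (k - 1)

lemma shiftHomeo_hIter (n : ℤ) (z : ℤ → Bool) (k : ℤ) :
    hIter shiftHomeo n z k = z (k + n) := by
  induction n using Int.induction_on generalizing k with
  | zero => rw [hIter_zero]; simp
  | succ m ih =>
      rw [hIter_succ]
      show hIter shiftHomeo m z (k + 1) = z (k + (m + 1))
      rw [ih]
      congr 1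
      ring
  | pred m ih =>
      have e1 : (-(m : ℤ) - 1) = (-(m:ℤ)) - 1 := by ring
      rw [e1, hIter_pred]
      show hIter shiftHomeo (-(m:ℤ)) z (k - 1) = z (k + (-(m:ℤ) - 1))
      rw [ih]
      congr 1
      ring

/-- The orbit of the indicator of `A` under the shift. -/
def orbA (A : Set ℤ) : Set (ℤ → Bool) :=
  Set.range fun m : ℤ => fun k => decide ((k + m) ∈ A)

lemma orbA_inv (A : Set ℤ) : shiftHomeo '' orbA A = orbA A := by
  ext z
  constructor
  · rintro ⟨y, ⟨m, rfl⟩, rfl⟩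
    refine ⟨m + 1, ?_⟩
    funext k
    show decide ((k + (m + 1)) ∈ A) = decide ((k + 1 + m) ∈ A)
    congr 1
    ring_nf
  · rintro ⟨m, rfl⟩
    refine ⟨fun k => decide ((k + (m - 1)) ∈ A), ⟨m - 1, rfl⟩, ?_⟩
    funext k
    show decide ((k + 1 + (m - 1)) ∈ A) = decide ((k + m) ∈ A)
    congr 1
    ring

lemma closure_orbA_inv (A : Set ℤ) :
    shiftHomeo '' closure (orbA A) = closure (orbA A) := by
  rw [Homeomorph.image_closure, orbA_inv]

lemma mem_closure_orbA_window (A : Set ℤ) {z : ℤ → Bool}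
    (hz : z ∈ closure (orbA A)) (W : Finset ℤ) :
    ∃ m : ℤ, ∀ k ∈ W, z k = decide ((k + m) ∈ A) := by
  classical
  set V : Set (ℤ → Bool) := ⋂ k ∈ W, (fun w : ℤ → Bool => w k) ⁻¹' {z k} with hV
  have hVo : IsOpen V := isOpen_biInter_finset fun k _ =>
    (continuous_apply k).isOpen_preimage _ (isOpen_discrete _)
  have hzV : z ∈ V := Set.mem_iInter₂.mpr fun k _ => rfl
  obtain ⟨y, hyV, hyR⟩ := mem_closure_iff.mp hz V hVo hzV
  obtain ⟨m, rfl⟩ := hyR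
  refine ⟨m, fun k hk => ?_⟩
  exact (Set.mem_iInter₂.mp hyV k hk).symm

end AuxRecurrence

/-- Equivalent characterizations of sets of `d`-topological recurrence. -/
theorem statement3 (d : ℕ) (hd : 1 ≤ d) (S : Set ℤ) :
    ((∀ A : Set ℤ, Syndetic A →
        ∃ n ∈ S, ∃ m : ℤ, ∀ j ∈ Finset.range (d + 1), m + (j : ℤ) * n ∈ A)
      ↔ TopRecSet d S) ∧
    (TopRecSet d S ↔
      ∀ (X : Type) [MetricSpace X] [CompactSpace X] [Nonempty X] (T : X ≃ₜ X),
        ∃ (x : X) (ns : ℕ → ℤ), (∀ i, ns i ∈ S) ∧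
          ∀ j : ℕ, 1 ≤ j → j ≤ d →
            Filter.Tendsto (fun i => hIter T ((j : ℤ) * ns i) x) Filter.atTop (nhds x)) := by
  classical
  -- (1) → TopRec
  have imp1 : (∀ A : Set ℤ, Syndetic A →
      ∃ n ∈ S, ∃ m : ℤ, ∀ j ∈ Finset.range (d + 1), m + (j : ℤ) * n ∈ A) → TopRecSet d S := by
    intro h1 X _ _ T hmin U hUo hUne
    have hne2 := hUne
    obtain ⟨x0, _⟩ := hne2
    have hsyn : Syndetic {k : ℤ | hIter T k x0 ∈ U} := syndetic_Nset T hmin x0 U hUo hUne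
    obtain ⟨n, hnS, m, hm⟩ := h1 _ hsyn
    refine ⟨n, hnS, hIter T m x0, ?_⟩
    apply Set.mem_iInter₂.mpr
    intro j hj
    show hIter T ((j : ℤ) * n) (hIter T m x0) ∈ U
    rw [← hIter_add]
    have h2 := hm j hj
    have h3 : (j : ℤ) * n + m = m + (j : ℤ) * n := by ring
    rw [h3]
    exact h2
  -- TopRec → (1), via the subshift
  have imp2 : TopRecSet d S → (∀ A : Set ℤ, Syndetic A →
      ∃ n ∈ S, ∃ m : ℤ, ∀ j ∈ Finset.range (d + 1), m + (j : ℤ) * n ∈ A) := by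
    intro htr A hA
    obtain ⟨N₀, hN₀⟩ := hA
    set K := closure (orbA A) with hK
    have hKne : K.Nonempty := ⟨fun k => decide ((k + 0) ∈ A), subset_closure ⟨0, rfl⟩⟩
    have hKcl : IsClosed K := isClosed_closure
    have hKinv := closure_orbA_inv A
    obtain ⟨M, hMK, hMne, hMcl, hMinv, hMmin⟩ :=
      exists_minimal_subsystem shiftHomeo K hKne hKcl hKinv
    have hminM := minimalTDS_restrict shiftHomeo hMcl hMinv hMmin
    set TM := restrictHomeo shiftHomeo hMinv with hTM
    -- a point of M with a `true` coordinate
    obtain ⟨z₀, hz₀⟩ := hMne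
    have hz₀K : z₀ ∈ K := hMK hz₀
    obtain ⟨m₁, hm₁⟩ := mem_closure_orbA_window A hz₀K (Finset.Icc (0:ℤ) (N₀:ℤ))
    obtain ⟨j₁, hj₁le, hj₁le', hj₁A⟩ := hN₀ m₁
    have hk₀ : z₀ (j₁ - m₁) = true := by
      have hmem : j₁ - m₁ ∈ Finset.Icc (0:ℤ) (N₀:ℤ) := by
        rw [Finset.mem_Icc]
        constructor <;> linarith
      rw [hm₁ _ hmem]
      simp only [sub_add_cancel]
      exact decide_eq_true hj₁A
    set U : Set ↥M := {w : ↥M | (w : ℤ → Bool) 0 = true} with hU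
    have hUo : IsOpen U := by
      have hrepr : U = (fun w : ↥M => (w : ℤ → Bool) 0) ⁻¹' {true} := rfl
      rw [hrepr]
      exact (((continuous_apply (0:ℤ)).comp continuous_subtype_val)).isOpen_preimage _
        (isOpen_discrete _)
    have hUne : U.Nonempty := by
      refine ⟨hIter TM (j₁ - m₁) ⟨z₀, hz₀⟩, ?_⟩
      show ((hIter TM (j₁ - m₁) ⟨z₀, hz₀⟩ : ↥M) : ℤ → Bool) 0 = true
      rw [restrictHomeo_val, shiftHomeo_hIter]
      simpa using hk₀
    -- the metric
    letI : MetricSpace Bool := boolMS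
    letI : MetricSpace (ℤ → Bool) := PiCountable.metricSpace
    haveI : CompactSpace ↥M := isCompact_iff_compactSpace.mp hMcl.isCompact
    obtain ⟨n, hnS, w, hw⟩ := @htr ↥M _ this TM hminM U hUo hUne
    have hw' : ∀ j ∈ Finset.range (d + 1), (w : ℤ → Bool) ((j : ℤ) * n) = true := by
      intro j hj
      have h1 := Set.mem_iInter₂.mp hw j hj
      have h2 : ((hIter TM ((j : ℤ) * n) w : ↥M) : ℤ → Bool) 0 = true := h1
      rwa [restrictHomeo_val, shiftHomeo_hIter, zero_add] at h2
    have hwK : (w : ℤ → Bool) ∈ K := hMK w.2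
    obtain ⟨m, hm⟩ := mem_closure_orbA_window A hwK
      (Finset.image (fun j : ℕ => (j : ℤ) * n) (Finset.range (d + 1)))
    refine ⟨n, hnS, m, ?_⟩
    intro j hj
    have h2 := hm ((j : ℤ) * n) (Finset.mem_image_of_mem _ hj)
    rw [hw' j hj] at h2
    have h3 : ((j : ℤ) * n + m) ∈ A := of_decide_eq_true h2.symm
    have h4 : m + (j : ℤ) * n = (j : ℤ) * n + m := by ring
    rw [h4]
    exact h3
  -- TopRec → (3)
  have imp3 : TopRecSet d S →
      ∀ (X : Type) [MetricSpace X] [CompactSpace X] [Nonempty X] (T : X ≃ₜ X),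
        ∃ (x : X) (ns : ℕ → ℤ), (∀ i, ns i ∈ S) ∧
          ∀ j : ℕ, 1 ≤ j → j ≤ d →
            Filter.Tendsto (fun i => hIter T ((j : ℤ) * ns i) x) Filter.atTop (nhds x) := by
    intro htr X _ _ _ T
    have huniv : T '' Set.univ = Set.univ := by
      rw [Set.image_univ]
      exact T.surjective.range_eq
    obtain ⟨M, -, hMne, hMcl, hMinv, hMmin⟩ :=
      exists_minimal_subsystem T Set.univ Set.univ_nonempty isClosed_univ huniv
    haveI : CompactSpace ↥M := isCompact_iff_compactSpace.mp hMcl.isCompact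
    haveI : Nonempty ↥M := hMne.to_subtype
    have hminM := minimalTDS_restrict T hMcl hMinv hMmin
    obtain ⟨x, ns, hns, hconv⟩ := key_construction d S htr ↥M (restrictHomeo T hMinv) hminM
    refine ⟨(x : X), ns, hns, ?_⟩
    intro j _ hjd
    have h1 := hconv j hjd
    have h2 := (continuous_subtype_val.continuousAt (x := x)).tendsto.comp h1
    refine h2.congr ?_
    intro i
    exact restrictHomeo_val T hMinv _ x
  -- (3) → TopRec
  have imp4 : (∀ (X : Type) [MetricSpace X] [CompactSpace X] [Nonempty X] (T : X ≃ₜ X),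
      ∃ (x : X) (ns : ℕ → ℤ), (∀ i, ns i ∈ S) ∧
        ∀ j : ℕ, 1 ≤ j → j ≤ d →
          Filter.Tendsto (fun i => hIter T ((j : ℤ) * ns i) x) Filter.atTop (nhds x)) →
      TopRecSet d S := by
    intro h3 X _ _ T hmin U hUo hUne
    haveI : Nonempty X := ⟨hUne.some⟩
    obtain ⟨x, ns, hns, hconv⟩ := h3 X T
    obtain ⟨z, ⟨m, rfl⟩, hzU⟩ := (hmin x).exists_mem_open hUo hUne
    have hconv' : ∀ j : ℕ, 1 ≤ j → j ≤ d →
        Filter.Tendsto (fun i => hIter T ((j : ℤ) * ns i) (hIter T m x))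
          Filter.atTop (nhds (hIter T m x)) := by
      intro j h1 h2
      have hc := ((hIter_continuous T m).continuousAt (x := x)).tendsto.comp (hconv j h1 h2)
      refine hc.congr ?_
      intro i
      show hIter T m (hIter T ((j : ℤ) * ns i) x) = hIter T ((j : ℤ) * ns i) (hIter T m x)
      rw [← hIter_add, ← hIter_add, add_comm]
    have hev : ∀ᶠ i in Filter.atTop, ∀ j ∈ Finset.Icc 1 d,
        hIter T ((j : ℤ) * ns i) (hIter T m x) ∈ U := by
      rw [Filter.eventually_all_finset]
      intro j hj
      obtain ⟨h1, h2⟩ := Finset.mem_Icc.mp hj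
      exact hconv' j h1 h2 (hUo.mem_nhds hzU)
    obtain ⟨i, hi⟩ := hev.exists
    refine ⟨ns i, hns i, hIter T m x, ?_⟩
    apply Set.mem_iInter₂.mpr
    intro j hj
    show hIter T ((j : ℤ) * ns i) (hIter T m x) ∈ U
    rcases Nat.eq_zero_or_pos j with rfl | hjpos
    · simpa [hIter_zero] using hzU
    · exact hi j (Finset.mem_Icc.mpr ⟨hjpos, Nat.lt_succ_iff.mp (Finset.mem_range.mp hj)⟩)
  exact ⟨⟨imp1, imp2⟩, ⟨imp3, fun h => imp4 h⟩⟩
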